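/- Abstract base case: let Z : 𝔥¹ → R be a ℚ-linear map into a commutative ℚ-algebra R satisfying (i) Z(w ∗ w') = Z(w)Z(w') for all w, w' ∈ 𝔥¹, (ii) Z(φ(w)) = Z(w) for all w ∈ 𝔥¹ where φ(x) = x+y, φ(y) = −y, and (iii) Z(x^{l-1}y) = 0 for all l ≥ 1. Then for all s ≥ 0, l ≥ 1 and positive integers m₁,…,m_s: −Z(z^{l-1}y z^{m₁-1}y⋯z^{m_s-1}y) + ∑_{i=1}^{s} Z(z^{m₁-1}y⋯z^{m_{i-1}-1}y z^{m_i-1}x z^{l-1}y z^{m_{i+1}-1}y⋯z^{m_s-1}y) = 0. -/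
import Mathlib


noncomputable section

/-- 𝔥 = ℚ⟨x,y⟩. -/
abbrev H : Type := FreeAlgebra ℚ (Fin 2)

/-- The generator x. -/
def Xg : H := FreeAlgebra.ι ℚ (0 : Fin 2)

/-- The generator y. -/
def Yg : H := FreeAlgebra.ι ℚ (1 : Fin 2)

/-- z = x + y. -/
def Zg : H := Xg + Yg

/-- Membership in 𝔥¹ = ℚ + 𝔥y. -/
def MemH1 (a : H) : Prop := ∃ (q : ℚ) (h : H), a = algebraMap ℚ H q + h * Yg

/-- The word z_{k₁}⋯z_{k_d} ∈ 𝔥¹, where z_k = x^{k-1}y. -/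
def zword (K : List ℕ+) : H := (K.map fun k => Xg ^ ((k : ℕ) - 1) * Yg).prod

/-- The harmonic product of two words of 𝔥¹, landing in 𝔥¹ ⊆ 𝔥. -/
def hmulF : List ℕ+ → List ℕ+ → H
  | [], L => zword L
  | K, [] => zword K
  | k :: K, l :: L =>
      Xg ^ ((k : ℕ) - 1) * Yg * hmulF K (l :: L)
      + Xg ^ ((l : ℕ) - 1) * Yg * hmulF (k :: K) L
      + Xg ^ (((k : ℕ) + (l : ℕ)) - 1) * Yg * hmulF K L
termination_by K L => K.length + L.length

/-- The automorphism φ of ℚ⟨x,y⟩ with φ(x) = x + y and φ(y) = -y. -/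
def phi : H →ₐ[ℚ] H := FreeAlgebra.lift ℚ (fun i : Fin 2 => if i = 0 then Xg + Yg else -Yg)

/-- The product z^{m₁-1}y ⋯ z^{m_s-1}y. -/
def zy (ms : List ℕ+) : H := (ms.map fun m => Zg ^ ((m : ℕ) - 1) * Yg).prod


-- basic lemmas
lemma phi_X : phi Xg = Zg := by simp [phi, Xg, Zg, Yg]
lemma phi_Y : phi Yg = -Yg := by simp [phi, Yg]
lemma phi_Z : phi Zg = Xg := by rw [Zg, map_add, phi_X, phi_Y, Zg]; abel
lemma zy_nil : zy [] = 1 := rfl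
lemma zy_cons (m : ℕ+) (L : List ℕ+) : zy (m :: L) = Zg ^ ((m:ℕ)-1) * Yg * zy L := by
  simp [zy, mul_assoc]
lemma zword_nil : zword [] = 1 := rfl
lemma zword_cons (m : ℕ+) (L : List ℕ+) : zword (m :: L) = Xg ^ ((m:ℕ)-1) * Yg * zword L := by
  simp [zword, mul_assoc]
lemma hmulF_nil_left (L : List ℕ+) : hmulF [] L = zword L := by cases L <;> rw [hmulF]
lemma hmulF_nil_right (K : List ℕ+) : hmulF K [] = zword K := by cases K <;> simp [hmulF]
lemma hmulF_cons (k l : ℕ+) (K L : List ℕ+) : hmulF (k::K) (l::L) =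
      Xg ^ ((k : ℕ) - 1) * Yg * hmulF K (l :: L)
      + Xg ^ ((l : ℕ) - 1) * Yg * hmulF (k :: K) L
      + Xg ^ (((k : ℕ) + (l : ℕ)) - 1) * Yg * hmulF K L := by rw [hmulF]

def term (l : ℕ+) (ms : List ℕ+) (i : Fin ms.length) : H :=
  zy (ms.take (i : ℕ)) * (Zg ^ ((ms.get i : ℕ) - 1) * Xg * Zg ^ ((l : ℕ) - 1) * Yg)
    * zy (ms.drop ((i : ℕ) + 1))

def E (l : ℕ+) (ms : List ℕ+) : H :=
  -(Zg ^ ((l:ℕ)-1) * Yg * zy ms) + ∑ i : Fin ms.length, term l ms i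

lemma Zpow (m l : ℕ+) : Zg ^ ((m:ℕ)-1) * Zg * Zg ^ ((l:ℕ)-1) = Zg ^ ((m:ℕ)+(l:ℕ)-1) := by
  have h : (m:ℕ)+(l:ℕ)-1 = ((m:ℕ)-1) + 1 + ((l:ℕ)-1) := by
    have := m.pos; have := l.pos; omega
  rw [h, pow_add, pow_add, pow_one]

lemma term_succ (l m : ℕ+) (L : List ℕ+) (i : Fin L.length) :
    term l (m :: L) i.succ = Zg ^ ((m:ℕ)-1) * Yg * term l L i := by
  simp [term, zy_cons, List.take_succ_cons, List.drop_succ_cons, mul_assoc]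

lemma E_cons (l m : ℕ+) (L : List ℕ+) :
    E l (m :: L) = Zg ^ ((m:ℕ)-1) * Yg * E l L
      + Zg ^ ((m:ℕ)+(l:ℕ)-1) * Yg * zy L
      - Zg ^ ((l:ℕ)-1) * Yg * (Zg ^ ((m:ℕ)-1) * Yg * zy L) := by
  have hs : ∑ i : Fin (L.length + 1), term l (m :: L) i
      = term l (m :: L) (0 : Fin (L.length+1)) + ∑ i : Fin L.length, term l (m :: L) i.succ :=
    Fin.sum_univ_succ _
  rw [E]; simp only [List.length_cons]; rw [hs]
  simp only [term_succ]
  rw [← Finset.mul_sum]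
  have h0 : term l (m :: L) (0 : Fin (L.length+1))
      = Zg ^ ((m:ℕ)-1) * Xg * Zg ^ ((l:ℕ)-1) * Yg * zy L := by
    simp [term, zy_nil]
  rw [h0, E, zy_cons]
  have hX : Xg = Zg - Yg := by rw [Zg]; abel
  have key : Zg ^ ((m:ℕ)-1) * Xg * Zg ^ ((l:ℕ)-1) * Yg * zy L
      = Zg ^ ((m:ℕ)+(l:ℕ)-1) * Yg * zy L
        - Zg ^ ((m:ℕ)-1) * Yg * (Zg ^ ((l:ℕ)-1) * Yg * zy L) := by
    rw [hX, ← Zpow m l]; noncomm_ring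
  rw [key]; noncomm_ring

lemma phi_zy (L : List ℕ+) : phi (zy L) = (-1:ℚ)^L.length • zword L := by
  induction L with
  | nil => simp [zy_nil, zword_nil]
  | cons m L ih =>
    rw [zy_cons, map_mul, map_mul, map_pow, phi_Z, phi_Y, ih, zword_cons]
    simp only [List.length_cons, pow_succ, mul_neg, neg_mul, mul_smul_comm, smul_smul,
      neg_smul, smul_neg, mul_assoc, neg_neg, mul_one, mul_neg_one]

lemma phiE (l : ℕ+) (L : List ℕ+) : phi (E l L) = (-1:ℚ)^L.length • hmulF [l] L := by
  induction L with
  | nil =>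
    simp [E, zy_nil, map_mul, map_pow, phi_Z, phi_Y, hmulF_nil_right, zword]
  | cons m L ih =>
    rw [E_cons]
    simp only [map_sub, map_add, map_mul, map_pow, phi_Z, phi_Y]
    rw [ih, phi_zy, hmulF_cons]
    simp only [hmulF_nil_left]
    rw [zword_cons,
      show (l:ℕ)+(m:ℕ) = (m:ℕ)+(l:ℕ) from Nat.add_comm _ _]
    simp only [List.length_cons, pow_succ, mul_neg, neg_mul, mul_smul_comm, smul_smul,
      neg_smul, smul_neg, mul_assoc, neg_neg, mul_one, mul_neg_one, smul_add, smul_sub,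
      sub_eq_add_neg]
    abel

lemma mulYg_zy (L : List ℕ+) : ∀ a : H, ∃ h : H, a * Yg * zy L = h * Yg := by
  induction L with
  | nil => exact fun a => ⟨a, by rw [zy_nil, mul_one]⟩
  | cons m L ih =>
    intro a
    obtain ⟨h, hh⟩ := ih (a * Yg * Zg ^ ((m:ℕ)-1))
    exact ⟨h, by rw [zy_cons, ← hh]; noncomm_ring⟩

lemma term_memY (l : ℕ+) (ms : List ℕ+) (i : Fin ms.length) : ∃ h : H, term l ms i = h * Yg := by
  obtain ⟨h, hh⟩ := mulYg_zy (ms.drop ((i:ℕ)+1))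
    (zy (ms.take (i:ℕ)) * (Zg ^ ((ms.get i : ℕ)-1) * Xg * Zg ^ ((l:ℕ)-1)))
  exact ⟨h, by rw [term, ← hh]; noncomm_ring⟩

lemma memH1_E (l : ℕ+) (ms : List ℕ+) : MemH1 (E l ms) := by
  obtain ⟨h0, hh0⟩ := mulYg_zy ms (Zg ^ ((l:ℕ)-1))
  choose f hf using term_memY l ms
  refine ⟨0, -h0 + ∑ i, f i, ?_⟩
  rw [map_zero, zero_add, E, hh0]
  simp only [hf]
  rw [add_mul, neg_mul, Finset.sum_mul]

/-- Base case: for any ℚ-linear Z : 𝔥¹ → R into a commutative ℚ-algebra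
satisfying the harmonic product rule, duality Z∘φ = Z, and Z(x^{l-1}y) = 0,
one has −Z(z^{l-1}y z^{m₁-1}y⋯z^{m_s-1}y)
  + ∑ᵢ Z(z^{m₁-1}y⋯z^{m_i-1}x z^{l-1}y⋯z^{m_s-1}y) = 0. -/
theorem abstract_base_case (R : Type*) [CommRing R] [Algebra ℚ R] (Zm : H →ₗ[ℚ] R)
    (hharm : ∀ K L : List ℕ+, Zm (hmulF K L) = Zm (zword K) * Zm (zword L))
    (hdual : ∀ a : H, MemH1 a → Zm (phi a) = Zm a)
    (hdepth1 : ∀ l : ℕ+, Zm (Xg ^ ((l : ℕ) - 1) * Yg) = 0)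
    (l : ℕ+) (ms : List ℕ+) :
    -(Zm (Zg ^ ((l : ℕ) - 1) * Yg * zy ms))
      + ∑ i : Fin ms.length,
          Zm (zy (ms.take (i : ℕ))
            * (Zg ^ ((ms.get i : ℕ) - 1) * Xg * Zg ^ ((l : ℕ) - 1) * Yg)
            * zy (ms.drop ((i : ℕ) + 1)))
      = 0 := by
  have hE : Zm (E l ms) = 0 := by
    rw [← hdual _ (memH1_E l ms), phiE, map_smul, hharm]
    have h1 : zword [l] = Xg ^ ((l:ℕ)-1) * Yg := by simp [zword]
    rw [h1, hdepth1, zero_mul, smul_zero]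
  rw [E, map_add, map_neg, map_sum] at hE
  simp only [term] at hE
  exact hE

end
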